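/- Let Q ∈ F_q[X0,X1,X2] be a homogeneous factor of C of degree at least 2 that is irreducible over the algebraic closure of F_q. Then Q does not divide Φ_q(C) = X0^q·∂C/∂X0 + X1^q·∂C/∂X1 + X2^q·∂C/∂X2; equivalently (writing X3 = e0·X0 + e1·X1 + e2·X2), Q does not divide X0^{3d} + X1^{3d} + X2^{3d} + X3^{3d}. -/

import Mathlib

open MvPolynomial

section Helpers

variable {σ : Type*}

lemma my_totalDegree_map_eq {R S : Type*} [CommSemiring R] [CommSemiring S] (f : R →+* S)
    (hf : Function.Injective f) (p : MvPolynomial σ R) :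
    (MvPolynomial.map f p).totalDegree = p.totalDegree := by
  unfold MvPolynomial.totalDegree
  rw [MvPolynomial.support_map_of_injective _ hf]

lemma my_degree_add (a b : σ →₀ ℕ) : (a + b).degree = a.degree + b.degree := by
  classical
  show ((a+b).sum fun _ e => e) = (a.sum fun _ e => e) + (b.sum fun _ e => e)
  exact Finsupp.sum_add_index' (fun _ => rfl) (fun _ _ _ => rfl)

lemma my_degree_eq_sum (d : σ →₀ ℕ) : d.degree = d.sum fun _ e => e := rfl

lemma my_coeff_zero_of_degree_gt {R : Type*} [CommSemiring R] {p : MvPolynomial σ R}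
    {d : σ →₀ ℕ} (h : p.totalDegree < d.degree) : coeff d p = 0 := by
  apply coeff_eq_zero_of_totalDegree_lt
  exact h

lemma my_top_component_mul {R : Type*} [CommRing R] {a b : MvPolynomial σ R} :
    homogeneousComponent (a.totalDegree + b.totalDegree) (a * b)
      = homogeneousComponent a.totalDegree a * homogeneousComponent b.totalDegree b := by
  classical
  ext d
  rw [coeff_homogeneousComponent]
  rw [MvPolynomial.coeff_mul, MvPolynomial.coeff_mul]
  by_cases hdeg : d.degree = a.totalDegree + b.totalDegree
  · rw [if_pos hdeg]
    apply Finset.sum_congr rfl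
    rintro ⟨u, v⟩ huv
    have huvd : u + v = d := Finset.HasAntidiagonal.mem_antidiagonal.mp huv
    have hsum : u.degree + v.degree = a.totalDegree + b.totalDegree := by
      rw [← my_degree_add, huvd, hdeg]
    rw [coeff_homogeneousComponent, coeff_homogeneousComponent]
    by_cases hu : u.degree = a.totalDegree
    · have hv : v.degree = b.totalDegree := by omega
      rw [if_pos hu, if_pos hv]
    · rw [if_neg hu]
      by_cases hub : u.degree ≤ a.totalDegree
      · have hv : b.totalDegree < v.degree := by omega
        rw [my_coeff_zero_of_degree_gt hv]
        simp
      · have hu2 : a.totalDegree < u.degree := by omega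
        rw [my_coeff_zero_of_degree_gt hu2]
        simp
  · rw [if_neg hdeg]
    symm
    apply Finset.sum_eq_zero
    rintro ⟨u, v⟩ huv
    have huvd : u + v = d := Finset.HasAntidiagonal.mem_antidiagonal.mp huv
    rw [coeff_homogeneousComponent, coeff_homogeneousComponent]
    by_cases hu : u.degree = a.totalDegree
    · by_cases hv : v.degree = b.totalDegree
      · exfalso; apply hdeg; rw [← huvd, my_degree_add, hu, hv]
      · rw [if_neg hv]; simp
    · rw [if_neg hu]; simp

lemma my_homogeneousComponent_totalDegree_ne_zero {R : Type*} [CommSemiring R]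
    (p : MvPolynomial σ R) (hp : p ≠ 0) :
    homogeneousComponent p.totalDegree p ≠ 0 := by
  have hne : p.support.Nonempty :=
    Finset.nonempty_iff_ne_empty.mpr (fun h => hp (MvPolynomial.support_eq_empty.mp h))
  obtain ⟨d, hd, hdeq⟩ := p.support.exists_mem_eq_sup hne (fun s => s.sum fun _ e => e)
  intro h0
  have := congrArg (coeff d) h0
  rw [coeff_homogeneousComponent] at this
  rw [if_pos] at this
  · exact (MvPolynomial.mem_support_iff.mp hd) (by simpa using this)
  · rw [my_degree_eq_sum]; exact hdeq.symm

lemma my_totalDegree_mul_eq {R : Type*} [CommRing R] [IsDomain R] {a b : MvPolynomial σ R}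
    (ha : a ≠ 0) (hb : b ≠ 0) :
    (a * b).totalDegree = a.totalDegree + b.totalDegree := by
  refine le_antisymm (totalDegree_mul a b) ?_
  by_contra hlt
  push_neg at hlt
  have h0 : homogeneousComponent (a.totalDegree + b.totalDegree) (a * b) = 0 :=
    homogeneousComponent_eq_zero _ _ hlt
  rw [my_top_component_mul] at h0
  exact mul_ne_zero (my_homogeneousComponent_totalDegree_ne_zero a ha)
    (my_homogeneousComponent_totalDegree_ne_zero b hb) h0

lemma my_totalDegree_le_of_dvd {R : Type*} [CommRing R] [IsDomain R] {a b : MvPolynomial σ R}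
    (h : a ∣ b) (hb : b ≠ 0) : a.totalDegree ≤ b.totalDegree := by
  obtain ⟨c, rfl⟩ := h
  have ha : a ≠ 0 := fun h0 => hb (by rw [h0, zero_mul])
  have hc : c ≠ 0 := fun h0 => hb (by rw [h0, mul_zero])
  rw [my_totalDegree_mul_eq ha hc]
  omega

lemma my_X_pow_add_X_pow_eq_prod {K : Type*} [Field K] [IsAlgClosed K] {d : ℕ} (hd : 0 < d)
    (i j : Fin 3) :
    (X i ^ d + X j ^ d : MvPolynomial (Fin 3) K)
      = ((Polynomial.X ^ d + Polynomial.C 1 : Polynomial K).roots.map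
          (fun r => X i - C r * X j)).prod := by
  set f : Polynomial K := Polynomial.X ^ d + Polynomial.C 1 with hf
  have hmon : f.Monic := by
    apply Polynomial.monic_X_pow_add
    exact lt_of_le_of_lt Polynomial.degree_C_le (by exact_mod_cast hd)
  have hsp : f.Splits := IsAlgClosed.splits f
  have hprod : f = (f.roots.map fun a => Polynomial.X - Polynomial.C a).prod :=
    hsp.eq_prod_roots_of_monic hmon
  have hcard : Multiset.card f.roots = d := by
    rw [Polynomial.splits_iff_card_roots.mp hsp, hf, Polynomial.natDegree_X_pow_add_C]
  set R := MvPolynomial (Fin 3) K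
  set L := FractionRing R
  have hinj : Function.Injective (algebraMap R L) := IsFractionRing.injective R L
  apply hinj
  set ψ : R →+* L := (algebraMap R L : R →+* L) with hψ
  set u : L := ψ (X i) with hu
  set v : L := ψ (X j) with hv
  have hvne : v ≠ 0 := by
    intro h0
    exact MvPolynomial.X_ne_zero j (hinj (by simpa using h0))
  set g : K →+* L := ψ.comp (C : K →+* R) with hg
  have hev := congrArg (Polynomial.eval₂RingHom g (u / v)) hprod
  rw [map_multiset_prod, Multiset.map_map] at hev
  have hL : (Polynomial.eval₂RingHom g (u / v)) f = (u / v) ^ d + 1 := by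
    simp [hf]
  have hfac : ∀ a : K, (Polynomial.eval₂RingHom g (u / v))
      ((fun a => Polynomial.X - Polynomial.C a) a) = u / v - g a := by
    intro a; simp
  rw [hL] at hev
  have hev2 : (u / v) ^ d + 1 = (f.roots.map fun a => u / v - g a).prod := by
    rw [hev]
    congr 1
    apply Multiset.map_congr rfl
    intro a _
    exact hfac a
  have key : u ^ d + v ^ d = (f.roots.map fun a => u - g a * v).prod := by
    have h1 : (f.roots.map fun a => u - g a * v).prod
        = (f.roots.map fun a => v * (u / v - g a)).prod := by
      congr 1
      apply Multiset.map_congr rfl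
      intro a _
      rw [mul_sub, mul_div_cancel₀ u hvne]
      ring
    rw [h1]
    have h2 : (f.roots.map fun a => v * (u / v - g a)).prod
        = (f.roots.map fun _ => v).prod * (f.roots.map fun a => u / v - g a).prod := by
      rw [← Multiset.prod_map_mul]
    rw [h2, Multiset.map_const', Multiset.prod_replicate, hcard, ← hev2]
    rw [div_pow, mul_add, mul_div_cancel₀ _ (pow_ne_zero d hvne), mul_one]
  calc ψ (X i ^ d + X j ^ d) = u ^ d + v ^ d := by rw [ψ.map_add, ψ.map_pow, ψ.map_pow]
    _ = (f.roots.map fun a => u - g a * v).prod := key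
    _ = ((f.roots.map fun r => X i - C r * X j).map ψ).prod := by
        rw [Multiset.map_map]
        congr 1
        apply Multiset.map_congr rfl
        intro a _
        simp only [Function.comp_apply, ψ.map_sub, ψ.map_mul, hg, RingHom.comp_apply, hu, hv]
    _ = ψ ((f.roots.map fun r => X i - C r * X j).prod) := (ψ.map_multiset_prod _).symm

lemma my_prime_dvd_bound {K : Type*} [Field K] [IsAlgClosed K] {d : ℕ} (hd : 0 < d)
    {i j : Fin 3} (hij : i ≠ j) {P : MvPolynomial (Fin 3) K} (hP : Prime P)
    (hdvd : P ∣ X i ^ d + X j ^ d) : P.totalDegree ≤ 1 := by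
  rw [my_X_pow_add_X_pow_eq_prod hd i j] at hdvd
  obtain ⟨l, hmem, hdvdl⟩ := hP.exists_mem_multiset_dvd hdvd
  obtain ⟨r, _, rfl⟩ := Multiset.mem_map.mp hmem
  have hl : (X i - C r * X j : MvPolynomial (Fin 3) K) ≠ 0 := by
    intro h0
    have hco := congrArg (MvPolynomial.eval (fun k => if k = i then (1:K) else 0)) h0
    simp [Ne.symm hij] at hco
  calc P.totalDegree ≤ (X i - C r * X j).totalDegree := my_totalDegree_le_of_dvd hdvdl hl
    _ ≤ 1 := by
      refine (totalDegree_sub _ _).trans ?_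
      apply max_le
      · exact le_of_eq (totalDegree_X i)
      · refine (totalDegree_mul _ _).trans ?_
        rw [totalDegree_C, totalDegree_X]

end Helpers

/-- The polynomial `C = X0^d + X1^d + X2^d + (e0·X0 + e1·X1 + e2·X2)^d` over `F_q`. -/
noncomputable def fermatSlice (F : Type) [Field F] (d : ℕ) (e0 e1 e2 : F) :
    MvPolynomial (Fin 3) F :=
  X 0 ^ d + X 1 ^ d + X 2 ^ d +
    (MvPolynomial.C e0 * X 0 + MvPolynomial.C e1 * X 1 + MvPolynomial.C e2 * X 2) ^ d

/-- `Φ_q(Q) = X0^q·∂Q/∂X0 + X1^q·∂Q/∂X1 + X2^q·∂Q/∂X2`. -/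
noncomputable def Phi (F : Type) [Field F] (q : ℕ) (Q : MvPolynomial (Fin 3) F) :
    MvPolynomial (Fin 3) F :=
  X 0 ^ q * MvPolynomial.pderiv 0 Q + X 1 ^ q * MvPolynomial.pderiv 1 Q +
    X 2 ^ q * MvPolynomial.pderiv 2 Q

/-- If `Q` is a homogeneous factor of `C` of degree at least `2` that is
irreducible over the algebraic closure of `F_q`, then `Q` does not divide `Φ_q(C)`;
equivalently (writing `X3 = e0·X0 + e1·X1 + e2·X2`), `Q` does not divide
`X0^{3d} + X1^{3d} + X2^{3d} + X3^{3d}`. -/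
theorem statement11 (p h : ℕ) (hp : Nat.Prime p) (hp3 : 3 < p) (hh : 0 < h)
    (F : Type) [Field F] [Fintype F] (hcard : Fintype.card F = p ^ h)
    (d : ℕ) (hd : p ^ h = 2 * d + 1) (e0 e1 e2 : F)
    (Q : MvPolynomial (Fin 3) F) (m : ℕ) (hQhom : Q.IsHomogeneous m)
    (hQdeg : 2 ≤ Q.totalDegree)
    (hQabs : Irreducible (MvPolynomial.map (algebraMap F (AlgebraicClosure F)) Q))
    (hQdvd : Q ∣ fermatSlice F d e0 e1 e2) :
    ¬ Q ∣ Phi F (p ^ h) (fermatSlice F d e0 e1 e2) ∧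
    ¬ Q ∣ (X 0 ^ (3 * d) + X 1 ^ (3 * d) + X 2 ^ (3 * d) +
      (MvPolynomial.C e0 * X 0 + MvPolynomial.C e1 * X 1 +
        MvPolynomial.C e2 * X 2) ^ (3 * d)) := by
  have hple : p ≤ p ^ h := Nat.le_self_pow (by omega) p
  have hd2 : 2 ≤ d := by omega
  haveI : Fact p.Prime := ⟨hp⟩
  have hcast0 : ((p ^ h : ℕ) : F) = 0 := by
    rw [← hcard]; exact FiniteField.cast_card_eq_zero F
  have hpF : (p : F) = 0 := by
    have := hcast0
    push_cast at this
    exact pow_eq_zero_iff (by omega) |>.mp this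
  haveI hFp : CharP F p := by
    have h1 : ringChar F ∣ p := ringChar.dvd hpF
    rcases hp.eq_one_or_self_of_dvd _ h1 with h2 | h2
    · exact absurd h2 (CharP.ringChar_ne_one)
    · exact ringChar.of_eq h2
  have h3F : (3 : F) ≠ 0 := by
    intro h0
    have h1 : p ∣ 3 := (CharP.cast_eq_zero_iff F p 3).mp (by exact_mod_cast h0)
    have := Nat.le_of_dvd (by norm_num) h1
    omega
  have hdF : (d : F) ≠ 0 := by
    intro h0
    rw [hd] at hcast0
    push_cast at hcast0
    rw [h0] at hcast0
    simp at hcast0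
  -- the main claim: Q does not divide S
  have hmain : ¬ Q ∣ (X 0 ^ (3 * d) + X 1 ^ (3 * d) + X 2 ^ (3 * d) +
      (MvPolynomial.C e0 * X 0 + MvPolynomial.C e1 * X 1 +
        MvPolynomial.C e2 * X 2) ^ (3 * d)) := by
    intro hQS
    set K := AlgebraicClosure F with hK
    have hφinj : Function.Injective (algebraMap F K) := (algebraMap F K).injective
    have hQ'prime : Prime (MvPolynomial.map (algebraMap F K) Q) :=
      (UniqueFactorizationMonoid.irreducible_iff_prime).mp hQabs
    have hkey : fermatSlice F d e0 e1 e2 *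
        (((MvPolynomial.C e0 * X 0 + MvPolynomial.C e1 * X 1 + MvPolynomial.C e2 * X 2) ^ d) ^ 2
          - (MvPolynomial.C e0 * X 0 + MvPolynomial.C e1 * X 1 + MvPolynomial.C e2 * X 2) ^ d
              * (X 0 ^ d + X 1 ^ d + X 2 ^ d)
          + (X 0 ^ d + X 1 ^ d + X 2 ^ d) ^ 2)
        - (X 0 ^ (3 * d) + X 1 ^ (3 * d) + X 2 ^ (3 * d) +
            (MvPolynomial.C e0 * X 0 + MvPolynomial.C e1 * X 1 +
              MvPolynomial.C e2 * X 2) ^ (3 * d))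
        = MvPolynomial.C (3 : F) *
            ((X 0 ^ d + X 1 ^ d) * (X 1 ^ d + X 2 ^ d) * (X 0 ^ d + X 2 ^ d)) := by
      unfold fermatSlice
      rw [show 3 * d = d * 3 from mul_comm 3 d]
      rw [pow_mul, pow_mul, pow_mul, pow_mul]
      rw [show (MvPolynomial.C (3 : F) : MvPolynomial (Fin 3) F) = 3 from by
        rw [show (3 : F) = ((3 : ℕ) : F) by norm_num, C_eq_coe_nat]; norm_num]
      ring
    have hQdvd3 : Q ∣ MvPolynomial.C (3 : F) *
        ((X 0 ^ d + X 1 ^ d) * (X 1 ^ d + X 2 ^ d) * (X 0 ^ d + X 2 ^ d)) := by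
      rw [← hkey]
      exact dvd_sub (hQdvd.mul_right _) hQS
    have hQ'dvd := map_dvd (MvPolynomial.map (algebraMap F K)) hQdvd3
    rw [map_mul] at hQ'dvd
    simp only [map_mul, map_add, map_pow, MvPolynomial.map_X, MvPolynomial.map_C] at hQ'dvd
    have hunit : IsUnit (MvPolynomial.C (algebraMap F K 3) : MvPolynomial (Fin 3) K) := by
      exact (isUnit_iff_ne_zero.mpr (fun h0 => h3F (hφinj (by simpa using h0)))).map
        (MvPolynomial.C : K →+* MvPolynomial (Fin 3) K)
    have hQ'd2 : MvPolynomial.map (algebraMap F K) Q ∣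
        ((X 0 ^ d + X 1 ^ d) * (X 1 ^ d + X 2 ^ d) * (X 0 ^ d + X 2 ^ d) :
          MvPolynomial (Fin 3) K) := by
      rcases hQ'prime.2.2 _ _ hQ'dvd with hcase | hcase
      · exact absurd (isUnit_of_dvd_unit hcase hunit) hQ'prime.not_unit
      · exact hcase
    have htd : (MvPolynomial.map (algebraMap F K) Q).totalDegree ≤ 1 := by
      have hd0 : 0 < d := by omega
      rcases hQ'prime.2.2 _ _ hQ'd2 with hcase | hcase
      · rcases hQ'prime.2.2 _ _ hcase with hcase' | hcase'
        · exact my_prime_dvd_bound hd0 (by decide) hQ'prime hcase'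
        · exact my_prime_dvd_bound hd0 (by decide) hQ'prime hcase'
      · exact my_prime_dvd_bound hd0 (by decide) hQ'prime hcase
    rw [my_totalDegree_map_eq _ hφinj] at htd
    omega
  constructor
  · intro hQPhi
    apply hmain
    have hfrob : (MvPolynomial.C e0 * X 0 + MvPolynomial.C e1 * X 1 +
        MvPolynomial.C e2 * X 2 : MvPolynomial (Fin 3) F) ^ (p ^ h)
        = MvPolynomial.C e0 * X 0 ^ (p ^ h) + MvPolynomial.C e1 * X 1 ^ (p ^ h) +
          MvPolynomial.C e2 * X 2 ^ (p ^ h) := by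
      rw [add_pow_char_pow, add_pow_char_pow]
      rw [mul_pow, mul_pow, mul_pow, ← C_pow, ← C_pow, ← C_pow]
      rw [← hcard, FiniteField.pow_card, FiniteField.pow_card, FiniteField.pow_card]
    have hPhiEq : Phi F (p ^ h) (fermatSlice F d e0 e1 e2)
        = MvPolynomial.C (d : F) * (X 0 ^ (3 * d) + X 1 ^ (3 * d) + X 2 ^ (3 * d) +
          (MvPolynomial.C e0 * X 0 + MvPolynomial.C e1 * X 1 +
            MvPolynomial.C e2 * X 2) ^ (3 * d)) := by
      unfold Phi fermatSlice
      rw [show 3 * d = (d - 1) + p ^ h from by omega]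
      rw [pow_add, pow_add, pow_add, pow_add, hfrob]
      simp only [map_add, pderiv_pow, pderiv_X, pderiv_C_mul, map_natCast]
      norm_num [Pi.single_apply, show (1:Fin 3) ≠ 0 by decide, show (2:Fin 3) ≠ 0 by decide,
        show (0:Fin 3) ≠ 1 by decide, show (2:Fin 3) ≠ 1 by decide,
        show (0:Fin 3) ≠ 2 by decide, show (1:Fin 3) ≠ 2 by decide]
      ring
    rw [hPhiEq] at hQPhi
    obtain ⟨c, hc⟩ := hQPhi
    refine ⟨MvPolynomial.C ((d : F)⁻¹) * c, ?_⟩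
    have h2 := congrArg (fun z => MvPolynomial.C ((d : F)⁻¹) * z) hc
    rw [← mul_assoc, ← C_mul, inv_mul_cancel₀ hdF, C_1, one_mul] at h2
    rw [h2]
    ring
  · exact hmain
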